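/- The k×k symmetric pentadiagonal Toeplitz matrix R_k with first row (6, −4, 1, 0, ..., 0) has determinant (k+1)(k+2)²(k+3)/12 for every k ≥ 1. -/

import Mathlib

open Matrix

/-- Pivots of the LDLᵀ factorization (0-based index). -/
noncomputable def ddQ (m : ℕ) : ℚ :=
  ((m : ℚ) + 3) * ((m : ℚ) + 4) / (((m : ℚ) + 1) * ((m : ℚ) + 2))

/-- First subdiagonal of L (0-based column index). -/
noncomputable def aaQ (m : ℕ) : ℚ := -2 * ((m : ℚ) + 1) / ((m : ℚ) + 3)

/-- Second subdiagonal of L (0-based column index). -/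
noncomputable def bbQ (m : ℕ) : ℚ :=
  ((m : ℚ) + 1) * ((m : ℚ) + 2) / (((m : ℚ) + 3) * ((m : ℚ) + 4))

/-- Entries of the unit lower-triangular factor L, as a function on ℕ. -/
noncomputable def LfQ (i j : ℕ) : ℚ :=
  if i = j then 1 else if i = j + 1 then aaQ j else if i = j + 2 then bbQ j else 0

lemma LfQ_vanish {i j m : ℕ} (h1 : j ≠ m) (h2 : j ≠ m + 1) (h3 : j ≠ m + 2) :
    LfQ i m * (ddQ m * LfQ j m) = 0 := by
  have : LfQ j m = 0 := by
    simp only [LfQ]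
    split_ifs with a b c <;> first | omega | rfl
  rw [this]; ring

lemma denom_ne (n : ℕ) (c : ℚ) (hc : 0 < c) : (n : ℚ) + c ≠ 0 := by positivity

set_option maxHeartbeats 2000000 in
/-- The key band sum identity over ℕ. -/
lemma band_sum (k i j : ℕ) (hi : i < k) (hj : j < k) :
    (∑ m ∈ Finset.range k, LfQ i m * (ddQ m * LfQ j m)) =
      (if i = j then 6 else if i = j + 1 ∨ j = i + 1 then -4
        else if i = j + 2 ∨ j = i + 2 then 1 else 0 : ℚ) := by
  rcases Nat.lt_or_ge j 2 with hj2 | hj2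
  · interval_cases j
    · -- j = 0 : support {0}
      have hsub : ({0} : Finset ℕ) ⊆ Finset.range k := by
        intro m hm; simp at hm; simp [hm]; omega
      rw [← Finset.sum_subset hsub (fun m _ hm => by
        simp only [Finset.mem_singleton] at hm
        exact LfQ_vanish (by omega) (by omega) (by omega))]
      rw [Finset.sum_singleton]
      simp only [LfQ, ddQ, aaQ, bbQ]
      split_ifs <;>
        first
          | omega
          | (push_cast; norm_num; done)
          | (exfalso; casesm* _ ∨ _, False <;> omega)
    · -- j = 1 : support {0, 1}
      have hsub : ({0, 1} : Finset ℕ) ⊆ Finset.range k := by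
        intro m hm; simp at hm; rcases hm with h | h <;> simp [h] <;> omega
      rw [← Finset.sum_subset hsub (fun m _ hm => by
        simp only [Finset.mem_insert, Finset.mem_singleton] at hm
        push_neg at hm
        exact LfQ_vanish (by omega) (by omega) (by omega))]
      rw [Finset.sum_insert (by simp), Finset.sum_singleton]
      simp only [LfQ, ddQ, aaQ, bbQ]
      split_ifs <;>
        first
          | omega
          | (push_cast; norm_num; done)
          | (exfalso; casesm* _ ∨ _, False <;> omega)
  · -- j = n + 2 : support {n, n+1, n+2}
    obtain ⟨n, rfl⟩ : ∃ n, j = n + 2 := ⟨j - 2, by omega⟩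
    have hsub : ({n, n + 1, n + 2} : Finset ℕ) ⊆ Finset.range k := by
      intro m hm
      simp only [Finset.mem_insert, Finset.mem_singleton] at hm
      rcases hm with h | h | h <;> simp [h] <;> omega
    rw [← Finset.sum_subset hsub (fun m _ hm => by
      simp only [Finset.mem_insert, Finset.mem_singleton] at hm
      push_neg at hm
      exact LfQ_vanish (by omega) (by omega) (by omega))]
    rw [Finset.sum_insert (by simp), Finset.sum_insert (by simp), Finset.sum_singleton]
    have h1 := denom_ne n 1 one_pos
    have h2 := denom_ne n 2 two_pos
    have h3 := denom_ne n 3 (by norm_num)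
    have h4 := denom_ne n 4 (by norm_num)
    have h5 := denom_ne n 5 (by norm_num)
    have h6 := denom_ne n 6 (by norm_num)
    simp only [LfQ, ddQ, aaQ, bbQ]
    split_ifs <;>
      first
        | omega
        | (push_cast; field_simp; try ring; done)
        | (exfalso; casesm* _ ∨ _, False <;> omega)

/-- Telescoping product of the pivots. -/
lemma prod_ddQ (k : ℕ) :
    (∏ m ∈ Finset.range k, ddQ m) =
      ((k : ℚ) + 1) * ((k : ℚ) + 2) ^ 2 * ((k : ℚ) + 3) / 12 := by
  induction k with
  | zero => norm_num
  | succ k ih =>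
    rw [Finset.prod_range_succ, ih]
    have h1 := denom_ne k 1 one_pos
    have h2 := denom_ne k 2 two_pos
    simp only [ddQ]
    push_cast
    field_simp
    ring

theorem det_pentadiagonal_toeplitz (k : ℕ) (hk : 1 ≤ k)
    (R : Matrix (Fin k) (Fin k) ℤ)
    (hR : ∀ i j : Fin k, R i j =
      if (i : ℕ) = (j : ℕ) then 6
      else if (i : ℕ) = (j : ℕ) + 1 ∨ (j : ℕ) = (i : ℕ) + 1 then -4
      else if (i : ℕ) = (j : ℕ) + 2 ∨ (j : ℕ) = (i : ℕ) + 2 then 1 else 0) :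
    ((R.det : ℚ)) = ((k : ℚ) + 1) * ((k : ℚ) + 2) ^ 2 * ((k : ℚ) + 3) / 12 := by
  classical
  set L : Matrix (Fin k) (Fin k) ℚ := fun i j => LfQ (i : ℕ) (j : ℕ) with hL
  set D : Matrix (Fin k) (Fin k) ℚ := Matrix.diagonal (fun i => ddQ (i : ℕ)) with hD
  have hmap : (Int.castRingHom ℚ).mapMatrix R = L * D * Lᵀ := by
    ext i j
    rw [Matrix.mul_assoc, Matrix.mul_apply]
    have hDL : ∀ m : Fin k, (D * Lᵀ) m j = ddQ (m : ℕ) * LfQ (j : ℕ) (m : ℕ) := by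
      intro m
      rw [hD, Matrix.diagonal_mul, Matrix.transpose_apply]
    simp only [hDL]
    simp only [hL]
    have := band_sum k (i : ℕ) (j : ℕ) i.isLt j.isLt
    rw [Fin.sum_univ_eq_sum_range (fun m => LfQ (i : ℕ) m * (ddQ m * LfQ (j : ℕ) m)) k,
      this]
    rw [RingHom.mapMatrix_apply, Matrix.map_apply, hR]
    split_ifs <;> norm_num
  have hcast : (R.det : ℚ) = ((Int.castRingHom ℚ).mapMatrix R).det :=
    (RingHom.map_det (Int.castRingHom ℚ) R)
  have hLtri : L.BlockTriangular OrderDual.toDual := by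
    intro i j hij
    simp only [OrderDual.toDual_lt_toDual] at hij
    have : (i : ℕ) < (j : ℕ) := hij
    simp only [hL, LfQ]
    split_ifs <;> first | omega | rfl
  have hdetL : L.det = 1 := by
    rw [Matrix.det_of_lowerTriangular L hLtri]
    apply Finset.prod_eq_one
    intro i _
    simp [hL, LfQ]
  have hdetD : D.det = ((k : ℚ) + 1) * ((k : ℚ) + 2) ^ 2 * ((k : ℚ) + 3) / 12 := by
    rw [hD, Matrix.det_diagonal,
      Fin.prod_univ_eq_prod_range (fun m => ddQ m) k, prod_ddQ]
  rw [hcast, hmap, Matrix.det_mul, Matrix.det_mul, Matrix.det_transpose, hdetL, hdetD]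
  ring
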